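/- Let X, Z be orthonormal bases of C^d with ρ^{(2)} the sequential-measurement state as above. The reduced state on S satisfies ρ^{(2)}_S = D_Z(D_X(ρ_S)), and the entanglement entropy across the S : M_1M_2 cut, E = H(ρ^{(2)}_S) (valid since ρ^{(2)} is pure whenever ρ_S is pure), satisfies E ≥ log(1/c) for pure ρ_S, where c = max_{j,k}|⟨X_j|Z_k⟩|². -/

import Mathlib

open scoped BigOperators
open Matrix Finset

noncomputable def shannon {n : Type*} [Fintype n] (p : n → ℝ) : ℝ :=
  -∑ k, p k * Real.logb 2 (p k)

noncomputable def overlap {d : ℕ} (X Z : Fin d → Fin d → ℂ) (j k : Fin d) : ℂ :=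
  ∑ i, star (X j i) * Z k i

/-- `X` is an orthonormal basis of `ℂ^d` (d orthonormal vectors). -/
def IsONB {d : ℕ} (X : Fin d → Fin d → ℂ) : Prop :=
  ∀ j k, (∑ i, star (X j i) * X k i) = if j = k then (1 : ℂ) else 0
open scoped ComplexOrder

/-- the rank-one projector |X_j⟩⟨X_j|. -/
noncomputable def proj {d : ℕ} (X : Fin d → Fin d → ℂ) (j : Fin d) :
    Matrix (Fin d) (Fin d) ℂ :=
  Matrix.of fun a b => X j a * star (X j b)

/-- complete dephasing in the X basis. -/
noncomputable def deph {d : ℕ} (X : Fin d → Fin d → ℂ) (ρ : Matrix (Fin d) (Fin d) ℂ) :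
    Matrix (Fin d) (Fin d) ℂ := ∑ j, proj X j * ρ * proj X j

/-- the post-measurement state ρ⁽²⁾ on S ⊗ M₁ ⊗ M₂, written entrywise. -/
noncomputable def postState {d : ℕ} (X Z : Fin d → Fin d → ℂ)
    (ρ : Matrix (Fin d) (Fin d) ℂ) :
    Matrix (Fin d × Fin d × Fin d) (Fin d × Fin d × Fin d) ℂ :=
  Matrix.of fun p q =>
    (proj Z p.2.2 * proj X p.2.1 * ρ * proj X q.2.1 * proj Z q.2.2) p.1 q.1

/-- partial trace over M₁M₂, giving the reduced state on S. -/
noncomputable def trM1M2 {d : ℕ}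
    (M : Matrix (Fin d × Fin d × Fin d) (Fin d × Fin d × Fin d) ℂ) :
    Matrix (Fin d) (Fin d) ℂ :=
  Matrix.of fun s s' => ∑ a, ∑ l, M (s, a, l) (s', a, l)

/-- von Neumann entropy (base-2). -/
noncomputable def vnEntropy {n : Type*} [Fintype n] [DecidableEq n] (ρ : Matrix n n ℂ) : ℝ :=
  if h : ρ.IsHermitian then -∑ i, (h.eigenvalues i) * Real.logb 2 (h.eigenvalues i) else 0

variable {d : ℕ}

lemma proj_mulVec (W : Fin d → Fin d → ℂ) (j : Fin d) (y : Fin d → ℂ) :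
    proj W j *ᵥ y = (star (W j) ⬝ᵥ y) • W j := by
  funext a
  simp only [Matrix.mulVec, proj, Matrix.of_apply, dotProduct, Pi.smul_apply, Pi.star_apply,
    smul_eq_mul, Finset.sum_mul]
  exact Finset.sum_congr rfl fun b _ => by ring

lemma star_dot_comm (w v : Fin d → ℂ) :
    star v ⬝ᵥ w = star (star w ⬝ᵥ v) := by
  simp only [dotProduct, star_sum, Pi.star_apply, star_mul', star_star]
  exact Finset.sum_congr rfl fun b _ => by ring

lemma sum_mulVec' (f : Fin d → Matrix (Fin d) (Fin d) ℂ) (v : Fin d → ℂ) :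
    (∑ j, f j) *ᵥ v = ∑ j, f j *ᵥ v := by
  funext a
  simp only [Matrix.mulVec, dotProduct, Matrix.sum_apply, Finset.sum_apply, Finset.sum_mul]
  exact Finset.sum_comm

lemma dotProduct_sum' (v : Fin d → ℂ) (f : Fin d → (Fin d → ℂ)) :
    v ⬝ᵥ (∑ j, f j) = ∑ j, v ⬝ᵥ f j := by
  simp only [dotProduct, Finset.sum_apply, Finset.mul_sum]
  exact Finset.sum_comm

lemma deph_quad (W : Fin d → Fin d → ℂ) (A : Matrix (Fin d) (Fin d) ℂ) (v : Fin d → ℂ) :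
    star v ⬝ᵥ (deph W A *ᵥ v) =
      ∑ j, (star (W j) ⬝ᵥ (A *ᵥ W j)) * (Complex.normSq (star (W j) ⬝ᵥ v) : ℂ) := by
  rw [deph, sum_mulVec', dotProduct_sum']
  refine Finset.sum_congr rfl fun j _ => ?_
  calc star v ⬝ᵥ ((proj W j * A * proj W j) *ᵥ v)
      = star v ⬝ᵥ ((proj W j * A) *ᵥ (proj W j *ᵥ v)) := by rw [Matrix.mulVec_mulVec]
    _ = (star (W j) ⬝ᵥ v) * (star v ⬝ᵥ ((proj W j * A) *ᵥ W j)) := by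
        rw [proj_mulVec, Matrix.mulVec_smul, dotProduct_smul, smul_eq_mul]
    _ = (star (W j) ⬝ᵥ v) * (star v ⬝ᵥ (proj W j *ᵥ (A *ᵥ W j))) := by
        rw [Matrix.mulVec_mulVec]
    _ = (star (W j) ⬝ᵥ v) * ((star (W j) ⬝ᵥ (A *ᵥ W j)) * (star v ⬝ᵥ W j)) := by
        rw [proj_mulVec, dotProduct_smul, smul_eq_mul]
    _ = (star (W j) ⬝ᵥ (A *ᵥ W j)) * ((star (W j) ⬝ᵥ v) * star (star (W j) ⬝ᵥ v)) := by
        rw [star_dot_comm (W j) v]; ring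
    _ = (star (W j) ⬝ᵥ (A *ᵥ W j)) * (Complex.normSq (star (W j) ⬝ᵥ v) : ℂ) := by
        congr 1
        rw [Complex.star_def, Complex.mul_conj]

lemma onb_complete {W : Fin d → Fin d → ℂ} (hW : IsONB W) :
    ∑ j, proj W j = (1 : Matrix (Fin d) (Fin d) ℂ) := by
  set B : Matrix (Fin d) (Fin d) ℂ := Matrix.of fun i j => W j i with hB
  have h1 : Bᴴ * B = 1 := by
    ext j k
    simp only [Matrix.mul_apply, Matrix.conjTranspose_apply, hB, Matrix.of_apply,
      Matrix.one_apply]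
    exact hW j k
  have h2 : B * Bᴴ = 1 := mul_eq_one_comm.mp h1
  ext a b
  calc (∑ j, proj W j) a b = ∑ j, W j a * star (W j b) := by
        simp [Matrix.sum_apply, proj]
    _ = (B * Bᴴ) a b := by
        simp [Matrix.mul_apply, hB, Matrix.conjTranspose_apply]
    _ = (1 : Matrix (Fin d) (Fin d) ℂ) a b := by rw [h2]

lemma proj_herm (W : Fin d → Fin d → ℂ) (j : Fin d) : (proj W j)ᴴ = proj W j := by
  ext a b
  simp [proj, Matrix.conjTranspose_apply, mul_comm]

lemma proj_idem {W : Fin d → Fin d → ℂ} (hW : IsONB W) (j : Fin d) :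
    proj W j * proj W j = proj W j := by
  ext a b
  simp only [Matrix.mul_apply, proj, Matrix.of_apply]
  calc ∑ m, W j a * star (W j m) * (W j m * star (W j b))
      = (∑ m, star (W j m) * W j m) * (W j a * star (W j b)) := by
        rw [Finset.sum_mul]; exact Finset.sum_congr rfl fun m _ => by ring
    _ = W j a * star (W j b) := by rw [hW j j]; simp

lemma deph_posSemidef {W : Fin d → Fin d → ℂ} (A : Matrix (Fin d) (Fin d) ℂ)
    (hA : A.PosSemidef) : (deph W A).PosSemidef := by
  unfold deph
  refine Finset.sum_induction _ (fun M : Matrix (Fin d) (Fin d) ℂ => M.PosSemidef)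
    (fun a b ha hb => Matrix.PosSemidef.add ha hb) Matrix.PosSemidef.zero fun j _ => ?_
  have := hA.mul_mul_conjTranspose_same (proj W j)
  rwa [proj_herm] at this

lemma trace_proj_mul (W : Fin d → Fin d → ℂ) (j : Fin d) (A : Matrix (Fin d) (Fin d) ℂ) :
    (proj W j * A).trace = star (W j) ⬝ᵥ (A *ᵥ W j) := by
  simp only [Matrix.trace, Matrix.diag, Matrix.mul_apply, proj, Matrix.of_apply, dotProduct,
    Matrix.mulVec, Pi.star_apply]
  rw [Finset.sum_comm]
  refine Finset.sum_congr rfl fun b _ => ?_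
  simp only [Finset.mul_sum]
  refine Finset.sum_congr rfl fun a _ => by ring

lemma trace_deph {W : Fin d → Fin d → ℂ} (hW : IsONB W) (A : Matrix (Fin d) (Fin d) ℂ) :
    (deph W A).trace = A.trace := by
  unfold deph
  rw [Matrix.trace_sum]
  calc ∑ j, (proj W j * A * proj W j).trace
      = ∑ j, (proj W j * A).trace := by
        refine Finset.sum_congr rfl fun j _ => ?_
        rw [Matrix.trace_mul_cycle, proj_idem hW]
    _ = (∑ j, proj W j * A).trace := by rw [Matrix.trace_sum]
    _ = A.trace := by rw [← Matrix.sum_mul, onb_complete hW, Matrix.one_mul]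

lemma trace_deph' {W : Fin d → Fin d → ℂ} (hW : IsONB W) (A : Matrix (Fin d) (Fin d) ℂ) :
    A.trace = ∑ j, star (W j) ⬝ᵥ (A *ᵥ W j) := by
  conv_lhs => rw [← trace_deph hW A]
  unfold deph
  rw [Matrix.trace_sum]
  refine Finset.sum_congr rfl fun j _ => ?_
  rw [Matrix.trace_mul_cycle, proj_idem hW, trace_proj_mul]

lemma trace_eq_sum_eigen {M : Matrix (Fin d) (Fin d) ℂ} (hM : M.IsHermitian) :
    M.trace = ∑ i, (hM.eigenvalues i : ℂ) := by
  conv_lhs => rw [hM.spectral_theorem]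
  rw [Unitary.conjStarAlgAut_apply, Matrix.trace_mul_cycle, Unitary.coe_star_mul_self, Matrix.one_mul,
    Matrix.trace_diagonal]
  simp

lemma eigenvalue_le {M : Matrix (Fin d) (Fin d) ℂ} (hM : M.IsHermitian) (c : ℝ)
    (h : ∀ v : Fin d → ℂ, (star v ⬝ᵥ (M *ᵥ v)).re ≤ c * (star v ⬝ᵥ v).re) (i : Fin d) :
    hM.eigenvalues i ≤ c := by
  have hv := hM.eigenvalues_eq i
  set v : Fin d → ℂ := ⇑(hM.eigenvectorBasis i) with hvdef
  have hnorm : star v ⬝ᵥ v = 1 := by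
    have h1 : ‖hM.eigenvectorBasis i‖ = 1 := hM.eigenvectorBasis.orthonormal.1 i
    have := @inner_self_eq_norm_sq_to_K ℂ _ _ _ _ (hM.eigenvectorBasis i)
    rw [EuclideanSpace.inner_eq_star_dotProduct] at this
    rw [h1] at this
    simp at this
    rw [dotProduct_comm]
    exact this
  have := h v
  rw [hnorm] at this
  simp only [Complex.one_re, mul_one] at this
  rw [hv]
  simpa using this

theorem reduced_state_and_entanglement_entropy {d : ℕ} (hd : 0 < d)
    (X Z : Fin d → Fin d → ℂ) (hX : IsONB X) (hZ : IsONB Z)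
    (c : ℝ)
    (hc : IsGreatest (Set.range fun jk : Fin d × Fin d => ‖overlap X Z jk.1 jk.2‖ ^ 2) c)
    (ρ : Matrix (Fin d) (Fin d) ℂ) (hρ : ρ.PosSemidef) (hρ1 : ρ.trace = 1) :
    trM1M2 (postState X Z ρ) = deph Z (deph X ρ) ∧
    (∀ ψ : Fin d → ℂ, (∑ i, star (ψ i) * ψ i) = 1 →
      ρ = Matrix.of (fun a b => ψ a * star (ψ b)) →
      vnEntropy (trM1M2 (postState X Z ρ)) ≥ Real.logb 2 (1 / c)) := by
  have part1 : trM1M2 (postState X Z ρ) = deph Z (deph X ρ) := by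
    have h2 : deph Z (deph X ρ) = ∑ l, ∑ a, proj Z l * proj X a * ρ * proj X a * proj Z l := by
      unfold deph
      refine Finset.sum_congr rfl fun l _ => ?_
      rw [Matrix.mul_sum, Matrix.sum_mul]
      exact Finset.sum_congr rfl fun a _ => by simp [Matrix.mul_assoc]
    rw [h2]
    ext s s'
    simp only [trM1M2, Matrix.of_apply, postState, Matrix.sum_apply]
    exact Finset.sum_comm
  refine ⟨part1, fun ψ hψ hρψ => ?_⟩
  rw [part1]
  have hApsd : (deph X ρ).PosSemidef := deph_posSemidef ρ hρ
  have hMpsd : (deph Z (deph X ρ)).PosSemidef := deph_posSemidef _ hApsd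
  have hMH : (deph Z (deph X ρ)).IsHermitian := hMpsd.1
  -- the fundamental bound on quadratic forms of M
  have hnsq : ∀ j l, (Complex.normSq (overlap X Z j l) : ℝ) ≤ c := by
    intro j l
    have := hc.2 (Set.mem_range_self (⟨j, l⟩ : Fin d × Fin d))
    rwa [Complex.sq_norm] at this
  have hpsum : ∑ j, (star (X j) ⬝ᵥ (ρ *ᵥ X j)).re = 1 := by
    have h := trace_deph' hX ρ
    rw [hρ1] at h
    have := congrArg Complex.re h.symm
    rw [Complex.re_sum] at this
    simpa using this
  have hq : ∀ l : Fin d, (star (Z l) ⬝ᵥ (deph X ρ *ᵥ Z l)).re ≤ c := by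
    intro l
    rw [deph_quad X ρ (Z l), Complex.re_sum]
    have hterm : ∀ j, ((star (X j) ⬝ᵥ (ρ *ᵥ X j)) *
        (Complex.normSq (star (X j) ⬝ᵥ Z l) : ℂ)).re
        = (star (X j) ⬝ᵥ (ρ *ᵥ X j)).re * Complex.normSq (star (X j) ⬝ᵥ Z l) := by
      intro j
      simp [Complex.mul_re]
    calc ∑ j, ((star (X j) ⬝ᵥ (ρ *ᵥ X j)) * (Complex.normSq (star (X j) ⬝ᵥ Z l) : ℂ)).re
        = ∑ j, (star (X j) ⬝ᵥ (ρ *ᵥ X j)).re * Complex.normSq (star (X j) ⬝ᵥ Z l) := by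
          exact Finset.sum_congr rfl fun j _ => hterm j
      _ ≤ ∑ j, (star (X j) ⬝ᵥ (ρ *ᵥ X j)).re * c := by
          refine Finset.sum_le_sum fun j _ => ?_
          have hnn : 0 ≤ (star (X j) ⬝ᵥ (ρ *ᵥ X j)).re := by
            simpa using hρ.re_dotProduct_nonneg (X j)
          have : (star (X j) ⬝ᵥ Z l) = overlap X Z j l := rfl
          rw [this]
          exact mul_le_mul_of_nonneg_left (hnsq j l) hnn
      _ = (∑ j, (star (X j) ⬝ᵥ (ρ *ᵥ X j)).re) * c := by rw [Finset.sum_mul]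
      _ = c := by rw [hpsum, one_mul]
  have hparseval : ∀ v : Fin d → ℂ,
      (star v ⬝ᵥ v).re = ∑ l, Complex.normSq (star (Z l) ⬝ᵥ v) := by
    intro v
    have hdZ1 : deph Z (1 : Matrix (Fin d) (Fin d) ℂ) = 1 := by
      unfold deph
      calc ∑ l, proj Z l * 1 * proj Z l = ∑ l, proj Z l := by
            refine Finset.sum_congr rfl fun l _ => ?_
            rw [Matrix.mul_one, proj_idem hZ]
        _ = 1 := onb_complete hZ
    have h1 : star v ⬝ᵥ v = star v ⬝ᵥ (deph Z (1 : Matrix (Fin d) (Fin d) ℂ) *ᵥ v) := by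
      rw [hdZ1, Matrix.one_mulVec]
    rw [h1, deph_quad, Complex.re_sum]
    refine Finset.sum_congr rfl fun l _ => ?_
    rw [Matrix.one_mulVec]
    have : star (Z l) ⬝ᵥ Z l = 1 := hZ l l |>.trans (by simp)
    rw [this, one_mul]
    simp
  have key : ∀ v : Fin d → ℂ,
      (star v ⬝ᵥ (deph Z (deph X ρ) *ᵥ v)).re ≤ c * (star v ⬝ᵥ v).re := by
    intro v
    rw [deph_quad Z (deph X ρ) v, Complex.re_sum, hparseval v, Finset.mul_sum]
    refine Finset.sum_le_sum fun l _ => ?_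
    have him : ((star (Z l) ⬝ᵥ (deph X ρ *ᵥ Z l)) *
        (Complex.normSq (star (Z l) ⬝ᵥ v) : ℂ)).re
        = (star (Z l) ⬝ᵥ (deph X ρ *ᵥ Z l)).re * Complex.normSq (star (Z l) ⬝ᵥ v) := by
      simp [Complex.mul_re]
    rw [him]
    exact mul_le_mul_of_nonneg_right (hq l) (Complex.normSq_nonneg _)
  have heig_le : ∀ i, hMH.eigenvalues i ≤ c := eigenvalue_le hMH c key
  have heig0 : ∀ i, 0 ≤ hMH.eigenvalues i := fun i => hMpsd.eigenvalues_nonneg i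
  have hsum : ∑ i, hMH.eigenvalues i = 1 := by
    have h := trace_eq_sum_eigen hMH
    rw [trace_deph hZ, trace_deph hX, hρ1] at h
    have : ((∑ i, hMH.eigenvalues i : ℝ) : ℂ) = ((1 : ℝ) : ℂ) := by
      push_cast
      rw [← h]
    exact_mod_cast this
  have hc0 : 0 < c := by
    by_contra hcc
    push_neg at hcc
    have h2 : ∑ i, hMH.eigenvalues i ≤ ∑ _i : Fin d, c :=
      Finset.sum_le_sum fun i _ => heig_le i
    rw [hsum, Finset.sum_const, Finset.card_univ, Fintype.card_fin, nsmul_eq_mul] at h2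
    have : (d : ℝ) * c ≤ 0 := mul_nonpos_of_nonneg_of_nonpos (Nat.cast_nonneg d) hcc
    linarith
  rw [vnEntropy, dif_pos hMH, one_div, Real.logb_inv, ge_iff_le, neg_le_neg_iff]
  calc ∑ i, hMH.eigenvalues i * Real.logb 2 (hMH.eigenvalues i)
      ≤ ∑ i, hMH.eigenvalues i * Real.logb 2 c := by
        refine Finset.sum_le_sum fun i _ => ?_
        rcases eq_or_lt_of_le (heig0 i) with h0 | h0
        · rw [← h0]; simp
        · exact mul_le_mul_of_nonneg_left
            (Real.logb_le_logb_of_le one_lt_two h0 (heig_le i)) (heig0 i)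
    _ = (∑ i, hMH.eigenvalues i) * Real.logb 2 c := (Finset.sum_mul _ _ _).symm
    _ = Real.logb 2 c := by rw [hsum, one_mul]
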